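/- Let P be a smooth manifold (finite-dimensional, Hausdorff, paracompact), let A be a local algebra with residue homomorphism 0_A : A → ℝ, let p ∈ P, and let u : C^∞(P) → A be an identity-preserving ℝ-algebra homomorphism such that 0_A ∘ u = ev_p. Then for any two smooth functions f, g : P → ℝ that agree on some neighbourhood of p, one has u(f) = u(g); i.e., u(f) depends only on the germ of f at p. -/

import Mathlib

open scoped Manifold

/-- Let `P` be a smooth manifold (finite-dimensional, Hausdorff,
paracompact), let `A` be a local algebra with residue homomorphism `0_A : A → ℝ`, let `p ∈ P`,
and let `u : C^∞(P) → A` be an identity-preserving `ℝ`-algebra homomorphism such that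
`0_A ∘ u = ev_p`.  Then for any two smooth functions `f, g : P → ℝ` agreeing on some
neighbourhood of `p`, one has `u(f) = u(g)`; i.e. `u(f)` depends only on the germ of `f`
at `p`. -/
theorem pointProche_depends_only_on_germ
    (E : Type) [NormedAddCommGroup E] [NormedSpace ℝ E] [FiniteDimensional ℝ E]
    (H : Type) [TopologicalSpace H] (I : ModelWithCorners ℝ E H)
    (P : Type) [TopologicalSpace P] [ChartedSpace H P] [IsManifold I (⊤ : ℕ∞) P]
    [T2Space P] [ParacompactSpace P]
    (A : Type) [CommRing A] [Algebra ℝ A] [FiniteDimensional ℝ A] [IsLocalRing A]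
    (hres : Nonempty (IsLocalRing.ResidueField A ≃ₐ[ℝ] ℝ))
    (ρ : A →ₐ[ℝ] ℝ)
    (p : P)
    (u : ContMDiffMap I 𝓘(ℝ, ℝ) P ℝ (⊤ : ℕ∞) →ₐ[ℝ] A)
    (hu : ∀ f : ContMDiffMap I 𝓘(ℝ, ℝ) P ℝ (⊤ : ℕ∞), ρ (u f) = f p) :
    ∀ f g : ContMDiffMap I 𝓘(ℝ, ℝ) P ℝ (⊤ : ℕ∞), (∀ᶠ x in nhds p, f x = g x) → u f = u g := by
  intro f g hfg
  -- choose a smooth bump function at `p` whose closed support is contained in the set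
  -- where `f = g`
  obtain ⟨φ, -, hφsub⟩ :=
    (SmoothBumpFunction.nhds_basis_tsupport (I := I) p).mem_iff.mp hfg
  set Φ : ContMDiffMap I 𝓘(ℝ, ℝ) P ℝ (⊤ : ℕ∞) := ⟨φ, φ.contMDiff⟩ with hΦ
  -- `(f - g) * Φ = 0`
  have hmul : (f - g) * Φ = 0 := by
    ext x
    by_cases hx : x ∈ tsupport ⇑φ
    · have : f x = g x := hφsub hx
      show (f x - g x) * φ x = 0
      simp [hΦ, this]
    · have : φ x = 0 := image_eq_zero_of_notMem_tsupport hx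
      show (f x - g x) * φ x = 0
      simp [hΦ, this]
  set a : A := u f - u g with ha
  set b : A := u Φ with hb
  have hab : a * b = 0 := by
    have := congrArg u hmul
    rwa [map_mul, map_sub, map_zero] at this
  -- `1 - b` is in the maximal ideal
  have hρb : ρ b = 1 := by
    have := hu Φ
    simpa [hb, hΦ, φ.eq_one] using this
  have hmem : 1 - b ∈ IsLocalRing.maximalIdeal A := by
    rw [IsLocalRing.mem_maximalIdeal]
    intro hunit
    have : IsUnit (ρ (1 - b)) := hunit.map ρ
    rw [map_sub, map_one, hρb, sub_self] at this
    exact this.ne_zero rfl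
  -- the maximal ideal is nilpotent since `A` is Artinian
  haveI : IsArtinianRing A := isArtinian_of_tower ℝ inferInstance
  obtain ⟨n, hn⟩ := IsArtinianRing.isNilpotent_jacobson_bot (R := A)
  have hc : (1 - b) ^ n = 0 := by
    have h1 : 1 - b ∈ Ideal.jacobson (⊥ : Ideal A) := by
      rwa [IsLocalRing.jacobson_eq_maximalIdeal (⊥ : Ideal A) bot_ne_top]
    have h2 : (1 - b) ^ n ∈ (Ideal.jacobson (⊥ : Ideal A)) ^ n := Ideal.pow_mem_pow h1 n
    rw [hn] at h2
    simpa using h2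
  -- `a = a * (1 - b) ^ n = 0`
  have hstep : a * (1 - b) = a := by rw [mul_sub, mul_one, hab, sub_zero]
  have key : ∀ m : ℕ, a = a * (1 - b) ^ m := by
    intro m
    induction m with
    | zero => simp
    | succ k ih => rw [pow_succ, ← mul_assoc, ← ih, hstep, ih]
  have : a = 0 := by rw [key n, hc, mul_zero]
  have := sub_eq_zero.mp this
  exact this
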